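/- Fix an integer k ≥ 2. For every ρ > 0 there exist ε > 0, c > 0, and n₀ such that for all n ≥ n₀: every simple k-SAT formula G on n variables that has at least (1−ε)·C(n,k) clauses and is ρ-far from unate contains at least c·n^{k+1} non-unate simplex subformulae. -/

import Mathlib

section Defs

variable {V W : Type*}

/-- A clause is a finite set of literals; a literal is a variable paired with a polarity
(`true` = positive, `false` = negative). -/
abbrev SatClause (V : Type*) := Finset (V × Bool)

/-- A formula is a finite set of clauses. -/
abbrev SatFormula (V : Type*) := Finset (SatClause V)

/-- The set of variables used by a clause. -/
def clauseVars [DecidableEq V] (C : SatClause V) : Finset V := C.image Prod.fst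

/-- A valid `k`-SAT clause: `k` literals on `k` distinct variables. -/
def IsKClause [DecidableEq V] (k : ℕ) (C : SatClause V) : Prop :=
  C.card = k ∧ (clauseVars C).card = k

/-- A valid `k`-SAT formula. -/
def IsKFormula [DecidableEq V] (k : ℕ) (G : SatFormula V) : Prop :=
  ∀ C ∈ G, IsKClause k C

/-- An assignment satisfies a clause if it makes all of its literals true. -/
def SatisfiesClause (a : V → Bool) (C : SatClause V) : Prop := ∀ l ∈ C, a l.1 = l.2

/-- A formula is minimal if every clause has a witness assignment satisfying it and no other
clause. -/
def MinimalFormula (G : SatFormula V) : Prop :=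
  ∀ C ∈ G, ∃ w : V → Bool, SatisfiesClause w C ∧ ∀ C' ∈ G, SatisfiesClause w C' → C' = C

/-- A formula is simple if no two distinct clauses use the same set of variables. -/
def SimpleFormula [DecidableEq V] (G : SatFormula V) : Prop :=
  ∀ C ∈ G, ∀ C' ∈ G, clauseVars C = clauseVars C' → C = C'

/-- A formula is unate if every variable occurs with only one polarity. -/
def UnateFormula (G : SatFormula V) : Prop :=
  ∀ x : V, ¬ ((∃ C ∈ G, (x, true) ∈ C) ∧ (∃ C ∈ G, (x, false) ∈ C))

/-- The set of variables used by a formula. -/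
def formulaVars [DecidableEq V] (G : SatFormula V) : Finset V := G.biUnion clauseVars

/-- `f` is a `k`-SAT function: it is computed by some `k`-SAT formula (value `1` iff some
clause has all its literals satisfied). -/
def IsKSatFunction (k n : ℕ) (f : (Fin n → Bool) → Bool) : Prop :=
  ∃ G : SatFormula (Fin n), IsKFormula k G ∧
    ∀ a : Fin n → Bool, f a = true ↔ ∃ C ∈ G, SatisfiesClause a C

/-- Relabel the variables of a formula along `φ`. -/
def mapFormula [DecidableEq V] [DecidableEq W] (φ : W → V) (F : SatFormula W) : SatFormula V :=
  F.image (fun C => C.image (fun l => (φ l.1, l.2)))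

/-- `G'` is a copy of `F`: it is obtained from `F` by an injective relabeling of variables. -/
def IsCopyOf [DecidableEq V] [DecidableEq W] (F : SatFormula W) (G' : SatFormula V) : Prop :=
  ∃ φ : W → V, Set.InjOn φ ↑(formulaVars F) ∧ G' = mapFormula φ F

/-- The number of copies of `F` in `G`, i.e. of subformulae of `G` isomorphic to `F`. -/
noncomputable def copyCount [DecidableEq V] [DecidableEq W] (F : SatFormula W)
    (G : SatFormula V) : ℕ :=
  Set.ncard {G' : SatFormula V | G' ⊆ G ∧ IsCopyOf F G'}

/-- The `b`-blowup of a clause: replace each literal by the literal of the same polarity on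
one of the `b` duplicates of its variable, in all possible ways. -/
def clauseBlowup [DecidableEq V] (b : ℕ) (C : SatClause V) :
    Finset (SatClause (V × Fin b)) :=
  (C.pi (fun _ => (Finset.univ : Finset (Fin b)))).image
    (fun g => C.attach.image (fun l => ((l.1.1, g l.1 l.2), l.1.2)))

/-- The `b`-blowup of a formula. -/
def formulaBlowup [DecidableEq V] (b : ℕ) (G : SatFormula V) : SatFormula (V × Fin b) :=
  G.biUnion (clauseBlowup b)

/-- The weight of a formula on `n` variables:
`wt(G) = Σ_i log₂(i+1)·α_i(G)` where `α_i(G)·C(n,k)` counts the `k`-sets of variables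
supporting exactly `i` clauses. -/
noncomputable def formulaWt (k n : ℕ) (G : SatFormula (Fin n)) : ℝ :=
  (∑ S ∈ (Finset.univ : Finset (Fin n)).powersetCard k,
    Real.logb 2 (((G.filter (fun C => clauseVars C = S)).card : ℝ) + 1)) / (n.choose k)

/-- A partially directed graph: a set of undirected edges together with a set of directed
(pointed) edges. -/
structure PDG (V : Type*) where
  undir : Finset (Finset V)
  dir : Finset (Finset V × V)

/-- `H` is a valid `k`-PDG: all edges have `k` vertices, each directed edge is pointed at one
of its vertices, and each `k`-set carries at most one edge (undirected or directed). -/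
def PDG.IsValid (k : ℕ) (H : PDG V) : Prop :=
  (∀ e ∈ H.undir, e.card = k) ∧
  (∀ p ∈ H.dir, p.1.card = k ∧ p.2 ∈ p.1) ∧
  (∀ p ∈ H.dir, p.1 ∉ H.undir) ∧
  (∀ p ∈ H.dir, ∀ q ∈ H.dir, p.1 = q.1 → p = q)

/-- `F` is a subgraph of `H`: a copy of `F` can be obtained from `H` by deleting vertices,
deleting edges, and/or forgetting directions of edges. -/
def PDG.IsSubgraph [DecidableEq V] (F : PDG W) (H : PDG V) : Prop :=
  ∃ φ : W → V, Function.Injective φ ∧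
    (∀ e ∈ F.undir, e.image φ ∈ H.undir ∨ ∃ v, (e.image φ, v) ∈ H.dir) ∧
    (∀ p ∈ F.dir, (p.1.image φ, φ p.2) ∈ H.dir)

/-- The image of a PDG under a relabeling of vertices. -/
def PDG.map [DecidableEq V] (φ : W → V) (F : PDG W) : PDG V :=
  ⟨F.undir.image (Finset.image φ), F.dir.image (fun p => (p.1.image φ, φ p.2))⟩

/-- The PDG `T_k` on vertex set `{0, …, k}` (0-indexed): undirected edges everything-but-`k`
and everything-but-`k-2`, and the edge everything-but-`k-1` directed toward `k`. -/
def TkPDG (k : ℕ) : PDG (Fin (k + 1)) where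
  undir := { Finset.univ.erase ⟨k, Nat.lt_succ_self k⟩,
             Finset.univ.erase ⟨k - 2, by omega⟩ }
  dir := { (Finset.univ.erase ⟨k - 1, by omega⟩, ⟨k, Nat.lt_succ_self k⟩) }

/-- A semisimple formula: every `k`-set of variables supports at most one clause, or exactly
two clauses whose polarities differ on exactly one variable. -/
def SemisimpleFormula [DecidableEq V] (G : SatFormula V) : Prop :=
  ∀ C₁ ∈ G, ∀ C₂ ∈ G, C₁ ≠ C₂ → clauseVars C₁ = clauseVars C₂ →
    (((C₁ \ C₂).image Prod.fst).card = 1 ∧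
      ∀ C₃ ∈ G, clauseVars C₃ = clauseVars C₁ → C₃ = C₁ ∨ C₃ = C₂)

/-- The type of a (semisimple) formula: an undirected edge on each variable set supporting
exactly one clause, and for each variable set supporting two clauses a directed edge pointed
at the variable where the two clauses differ. -/
def formulaType [DecidableEq V] (G : SatFormula V) : PDG V where
  undir := (G.filter (fun C => ∀ C' ∈ G, clauseVars C' = clauseVars C → C' = C)).image
    clauseVars
  dir := ((G ×ˢ G).filter (fun p => p.1 ≠ p.2 ∧ clauseVars p.1 = clauseVars p.2)).biUnion
    (fun p => ((p.1 \ p.2).image Prod.fst).image (fun v => (clauseVars p.1, v)))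

end Defs

section Proof

open Finset

namespace FFU

variable {n k : ℕ}

lemma mem_clauseVars {C : SatClause (Fin n)} {x : Fin n} :
    x ∈ clauseVars C ↔ ∃ b, (x, b) ∈ C := by
  constructor
  · intro h
    rcases Finset.mem_image.1 h with ⟨p, hp, rfl⟩
    exact ⟨p.2, hp⟩
  · rintro ⟨b, hb⟩
    exact Finset.mem_image.2 ⟨(x, b), hb, rfl⟩

lemma polarity_unique {C : SatClause (Fin n)} (hC : IsKClause k C)
    {x : Fin n} {b b' : Bool} (h1 : (x, b) ∈ C) (h2 : (x, b') ∈ C) : b = b' := by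
  have hinj : Set.InjOn Prod.fst (C : Set (Fin n × Bool)) := by
    rw [← Finset.card_image_iff]
    show #(image Prod.fst C) = #C
    rw [show image Prod.fst C = clauseVars C from rfl, hC.2, hC.1]
  have := hinj (Finset.mem_coe.2 h1) (Finset.mem_coe.2 h2) rfl
  exact congrArg Prod.snd this

lemma recover (S T : Finset (Fin n)) : (T \ (T \ S)) ∪ (S \ T) = S := by
  ext a; simp only [Finset.mem_union, Finset.mem_sdiff]; tauto

lemma count_helper {α β γ : Type*} [DecidableEq α] [DecidableEq β] [DecidableEq γ]
    (s : Finset α) (key : α → β) (cert : α → γ) (K : Finset β) (F : β → Finset γ)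
    (hkey : ∀ a ∈ s, key a ∈ K) (hcert : ∀ a ∈ s, cert a ∈ F (key a))
    (hinj : ∀ a ∈ s, ∀ b ∈ s, key a = key b → cert a = cert b → a = b)
    (M : ℕ) (hM : ∀ b ∈ K, (F b).card ≤ M) : s.card ≤ K.card * M := by
  have h1 : s.card = (s.image (fun a => (key a, cert a))).card := by
    rw [Finset.card_image_of_injOn]
    intro a ha b hb hab
    exact hinj a ha b hb (congrArg Prod.fst hab) (congrArg Prod.snd hab)
  have h2 : s.image (fun a => (key a, cert a)) ⊆ K.biUnion (fun b => {b} ×ˢ F b) := by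
    intro p hp
    rcases Finset.mem_image.1 hp with ⟨a, ha, rfl⟩
    exact Finset.mem_biUnion.2 ⟨key a, hkey a ha, by
      simp [Finset.mem_product, hcert a ha]⟩
  calc s.card = _ := h1
    _ ≤ (K.biUnion (fun b => {b} ×ˢ F b)).card := Finset.card_le_card h2
    _ ≤ ∑ b ∈ K, ({b} ×ˢ F b).card := Finset.card_biUnion_le
    _ ≤ ∑ _b ∈ K, M := Finset.sum_le_sum (fun b hb => by
        simpa [Finset.card_product] using hM b hb)
    _ = K.card * M := by rw [Finset.sum_const, smul_eq_mul]

lemma flip_exists (f : Finset (Fin n) → Prop) (x : Fin n) :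
    ∀ m (S S' : Finset (Fin n)), S.card = k → S'.card = k → x ∈ S → x ∈ S' →
      (S \ S').card = m → f S → ¬ f S' →
      ∃ T T' : Finset (Fin n), T.card = k ∧ T'.card = k ∧ x ∈ T ∧ x ∈ T' ∧
        (T \ T').card = 1 ∧ (T' \ T).card = 1 ∧ f T ∧ ¬ f T' ∧
        (S \ T).card + (S' \ T').card + 1 ≤ m := by
  intro m
  induction m with
  | zero =>
    intro S S' hS hS' _ _ hd hf hf'
    exfalso
    have hsub : S ⊆ S' := by
      intro a ha
      by_contra hna
      have : a ∈ S \ S' := Finset.mem_sdiff.2 ⟨ha, hna⟩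
      rw [Finset.card_eq_zero.1 hd] at this
      exact absurd this (Finset.notMem_empty a)
    have : S = S' := Finset.eq_of_subset_of_card_le hsub (hS'.trans hS.symm).le
    exact hf' (this ▸ hf)
  | succ m ih =>
    intro S S' hS hS' hxS hxS' hd hf hf'
    have hu : (S \ S').Nonempty := by
      rw [← Finset.card_pos, hd]; omega
    obtain ⟨u, hu⟩ := hu
    have huS : u ∈ S := (Finset.mem_sdiff.1 hu).1
    have huS' : u ∉ S' := (Finset.mem_sdiff.1 hu).2
    have hv : (S' \ S).Nonempty := by
      rw [← Finset.card_pos, Finset.card_sdiff_comm (hS'.trans hS.symm), hd]; omega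
    obtain ⟨v, hv⟩ := hv
    have hvS' : v ∈ S' := (Finset.mem_sdiff.1 hv).1
    have hvS : v ∉ S := (Finset.mem_sdiff.1 hv).2
    set S₁ : Finset (Fin n) := insert v (S.erase u) with hS₁def
    have hxne : x ≠ u := fun h => huS' (h ▸ hxS')
    have hS₁card : S₁.card = k := by
      have hkpos : 0 < k := hS ▸ Finset.card_pos.2 ⟨u, huS⟩
      rw [hS₁def, Finset.card_insert_of_notMem (fun hmem => hvS (Finset.mem_of_mem_erase hmem)),
        Finset.card_erase_of_mem huS, hS]
      omega
    have hxS₁ : x ∈ S₁ := Finset.mem_insert.2 (Or.inr (Finset.mem_erase.2 ⟨hxne, hxS⟩))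
    have hmemS₁ : ∀ a, a ∈ S₁ ↔ (a = v ∨ (a ∈ S ∧ a ≠ u)) := by
      intro a
      simp only [hS₁def, Finset.mem_insert, Finset.mem_erase]
      tauto
    have hdiff : S₁ \ S' = (S \ S').erase u := by
      ext a
      simp only [Finset.mem_sdiff, Finset.mem_erase, hmemS₁ a]
      constructor
      · rintro ⟨h1 | ⟨h2, h3⟩, h4⟩
        · exact absurd (h1 ▸ hvS') h4
        · exact ⟨h3, h2, h4⟩
      · rintro ⟨h1, h2, h3⟩
        exact ⟨Or.inr ⟨h2, h1⟩, h3⟩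
    have hdcard : (S₁ \ S').card = m := by
      rw [hdiff, Finset.card_erase_of_mem hu, hd]
      omega
    by_cases hf₁ : f S₁
    · obtain ⟨T, T', p1, p2, p3, p4, p5, p6, p7, p8, p9⟩ :=
        ih S₁ S' hS₁card hS' hxS₁ hxS' hdcard hf₁ hf'
      refine ⟨T, T', p1, p2, p3, p4, p5, p6, p7, p8, ?_⟩
      have hsub : S \ T ⊆ insert u (S₁ \ T) := by
        intro a ha
        rcases Finset.mem_sdiff.1 ha with ⟨haS, haT⟩
        rcases eq_or_ne a u with rfl | hne
        · exact Finset.mem_insert_self _ _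
        · exact Finset.mem_insert.2 (Or.inr (Finset.mem_sdiff.2
            ⟨(hmemS₁ a).2 (Or.inr ⟨haS, hne⟩), haT⟩))
      have := (Finset.card_le_card hsub).trans (Finset.card_insert_le _ _)
      omega
    · refine ⟨S, S₁, hS, hS₁card, hxS, hxS₁, ?_, ?_, hf, hf₁, ?_⟩
      · have : S \ S₁ = {u} := by
          ext a
          simp only [Finset.mem_sdiff, Finset.mem_singleton, hmemS₁ a]
          constructor
          · rintro ⟨h1, h2⟩
            by_contra hne
            exact h2 (Or.inr ⟨h1, hne⟩)
          · rintro rfl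
            refine ⟨huS, ?_⟩
            rintro (rfl | ⟨_, h⟩)
            · exact hvS huS
            · exact h rfl
        rw [this, Finset.card_singleton]
      · have : S₁ \ S = {v} := by
          ext a
          simp only [Finset.mem_sdiff, Finset.mem_singleton, hmemS₁ a]
          constructor
          · rintro ⟨h1 | ⟨h2, _⟩, h4⟩
            · exact h1
            · exact absurd h2 h4
          · rintro rfl
            exact ⟨Or.inl rfl, hvS⟩
        rw [this, Finset.card_singleton]
      · have : S' \ S₁ = (S' \ S).erase v := by
          ext a
          simp only [Finset.mem_sdiff, Finset.mem_erase, hmemS₁ a]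
          constructor
          · rintro ⟨h1, h2⟩
            refine ⟨fun h => h2 (Or.inl h), h1, fun hmem => h2 (Or.inr ⟨hmem, fun h => huS' (h ▸ h1)⟩)⟩
          · rintro ⟨h1, h2, h3⟩
            refine ⟨h2, ?_⟩
            rintro (rfl | ⟨hmem, _⟩)
            · exact h1 rfl
            · exact h3 hmem
        rw [Finset.sdiff_self, Finset.card_empty, this, Finset.card_erase_of_mem hv,
          Finset.card_sdiff_comm (hS'.trans hS.symm), hd]
        omega

noncomputable section
open scoped Classical

variable (k : ℕ) {n : ℕ} (G : SatFormula (Fin n))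

def presentSets : Finset (Finset (Fin n)) := G.image clauseVars

def missingSets : Finset (Finset (Fin n)) :=
  (Finset.powersetCard k Finset.univ).filter (fun U => U ∉ presentSets G)

def minpol (x : Fin n) : Bool :=
  decide ((G.filter (fun C => (x, true) ∈ C)).card ≤ (G.filter (fun C => (x, false) ∈ C)).card)

def Aset (x : Fin n) : SatFormula (Fin n) := G.filter (fun C => (x, minpol G x) ∈ C)

def Bset (x : Fin n) : SatFormula (Fin n) := G.filter (fun C => (x, !(minpol G x)) ∈ C)

def Dset : SatFormula (Fin n) := G.filter (fun C => ∃ x, (x, minpol G x) ∈ C)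

def fx (x : Fin n) (T : Finset (Fin n)) : Prop :=
  ∃ C ∈ G, clauseVars C = T ∧ (x, minpol G x) ∈ C

def edges (x : Fin n) : Finset (Finset (Fin n) × Finset (Fin n)) :=
  ((Finset.powersetCard k Finset.univ) ×ˢ (Finset.powersetCard k Finset.univ)).filter
    (fun e => x ∈ e.1 ∧ x ∈ e.2 ∧ (e.1 \ e.2).card = 1 ∧ (e.2 \ e.1).card = 1 ∧
      fx G x e.1 ∧ ¬ fx G x e.2)

def confPairs (x : Fin n) : Finset (SatClause (Fin n) × SatClause (Fin n)) :=
  (G ×ˢ G).filter (fun p => (x, minpol G x) ∈ p.1 ∧ (x, !(minpol G x)) ∈ p.2 ∧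
    (clauseVars p.1 ∪ clauseVars p.2).card = k + 1)

def confAll : Finset (SatClause (Fin n) × SatClause (Fin n)) :=
  (G ×ˢ G).filter (fun p => (clauseVars p.1 ∪ clauseVars p.2).card = k + 1 ∧
    ∃ x b, (x, b) ∈ p.1 ∧ (x, !b) ∈ p.2)

def smallPairs (n : ℕ) : Finset (Finset (Fin n) × Finset (Fin n)) :=
  ((Finset.range (k-1) ×ˢ Finset.range (k-1)).filter (fun ij => ij.1 + ij.2 ≤ k - 2)).biUnion
    (fun ij => (Finset.powersetCard ij.1 Finset.univ) ×ˢ (Finset.powersetCard ij.2 Finset.univ))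

def simplexAt (T : Finset (Fin n)) : SatFormula (Fin n) := G.filter (fun C => clauseVars C ⊆ T)

def fullT (T : Finset (Fin n)) : Prop := ∀ U ∈ Finset.powersetCard k T, U ∈ presentSets G

def nuSimplices : Finset (SatFormula (Fin n)) :=
  Finset.univ.filter (fun S : SatFormula (Fin n) => S ⊆ G ∧ SimpleFormula S ∧
    S.card = k + 1 ∧ (formulaVars S).card = k + 1 ∧ ¬ UnateFormula S)

end

variable {G : SatFormula (Fin n)}

lemma A_le_B (x : Fin n) : (Aset G x).card ≤ (Bset G x).card := by
  unfold Aset Bset minpol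
  by_cases h : (G.filter (fun C => (x, true) ∈ C)).card ≤ (G.filter (fun C => (x, false) ∈ C)).card
  · simp [h]
  · simp only [h, decide_eq_true_eq, decide_false, Bool.not_false]
    omega

lemma unate_GD : UnateFormula (G \ Dset G) := by
  rintro x ⟨⟨C1, h1, hx1⟩, ⟨C2, h2, hx2⟩⟩
  rcases Finset.mem_sdiff.1 h1 with ⟨h1G, h1D⟩
  rcases Finset.mem_sdiff.1 h2 with ⟨h2G, h2D⟩
  cases hb : minpol G x with
  | true => exact h1D (Finset.mem_filter.2 ⟨h1G, ⟨x, hb ▸ hx1⟩⟩)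
  | false => exact h2D (Finset.mem_filter.2 ⟨h2G, ⟨x, hb ▸ hx2⟩⟩)

lemma Dset_card : (Dset G).card ≤ ∑ x : Fin n, (Aset G x).card := by
  have hsub : Dset G ⊆ Finset.univ.biUnion (fun x => Aset G x) := by
    intro C hC
    rcases Finset.mem_filter.1 hC with ⟨hCG, x, hx⟩
    exact Finset.mem_biUnion.2 ⟨x, Finset.mem_univ x, Finset.mem_filter.2 ⟨hCG, hx⟩⟩
  exact (Finset.card_le_card hsub).trans Finset.card_biUnion_le

lemma presentSets_card (hs : SimpleFormula G) : (presentSets G).card = G.card :=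
  Finset.card_image_of_injOn (fun C hC C' hC' h => hs C hC C' hC' h)

lemma presentSets_sub (hG : IsKFormula k G) :
    presentSets G ⊆ Finset.powersetCard k Finset.univ := by
  intro U hU
  rcases Finset.mem_image.1 hU with ⟨C, hC, rfl⟩
  exact Finset.mem_powersetCard.2 ⟨Finset.subset_univ _, (hG C hC).2⟩

lemma missing_card (hG : IsKFormula k G) (hs : SimpleFormula G) :
    (missingSets k G).card + G.card = n.choose k := by
  have h1 : missingSets k G = Finset.powersetCard k Finset.univ \ presentSets G := by
    ext U
    simp [missingSets, Finset.mem_sdiff]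
  rw [h1, ← presentSets_card hs]
  rw [Finset.card_sdiff_add_card_eq_card (presentSets_sub hG)]
  simp [Finset.card_powersetCard]

lemma smallPairs_card (hn : 1 ≤ n) (hk : 2 ≤ k) :
    (smallPairs k n).card ≤ (k-1)^2 * n^(k-2) := by
  calc (smallPairs k n).card
      ≤ ∑ ij ∈ ((Finset.range (k-1) ×ˢ Finset.range (k-1)).filter (fun ij => ij.1 + ij.2 ≤ k - 2)),
          ((Finset.powersetCard ij.1 (Finset.univ : Finset (Fin n))) ×ˢ
            (Finset.powersetCard ij.2 Finset.univ)).card := Finset.card_biUnion_le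
    _ ≤ ∑ _ij ∈ ((Finset.range (k-1) ×ˢ Finset.range (k-1)).filter (fun ij => ij.1 + ij.2 ≤ k - 2)),
          n^(k-2) := by
        refine Finset.sum_le_sum (fun ij hij => ?_)
        rcases Finset.mem_filter.1 hij with ⟨_, hle⟩
        rw [Finset.card_product, Finset.card_powersetCard, Finset.card_powersetCard]
        simp only [Finset.card_univ, Fintype.card_fin]
        calc n.choose ij.1 * n.choose ij.2 ≤ n^ij.1 * n^ij.2 :=
              Nat.mul_le_mul (Nat.choose_le_pow _ _) (Nat.choose_le_pow _ _)
          _ = n^(ij.1 + ij.2) := (pow_add n _ _).symm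
          _ ≤ n^(k-2) := Nat.pow_le_pow_right hn hle
    _ ≤ (k-1)^2 * n^(k-2) := by
        rw [Finset.sum_const, smul_eq_mul]
        refine Nat.mul_le_mul_right _ ?_
        calc _ ≤ ((Finset.range (k-1)) ×ˢ (Finset.range (k-1))).card := Finset.card_filter_le _ _
          _ = (k-1)^2 := by rw [Finset.card_product, Finset.card_range]; ring

lemma perx (hk : 2 ≤ k) (hn : 1 ≤ n) (hG : IsKFormula k G) (hs : SimpleFormula G) (x : Fin n) :
    (Aset G x).card * (Bset G x).card ≤
      (edges k G x).card * (2^k * (2^k * ((k-1)^2 * n^(k-2)))) := by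
  classical
  set s := (Aset G x) ×ˢ (Bset G x) with hsdef
  have hex : ∀ a : SatClause (Fin n) × SatClause (Fin n), a ∈ s →
      ∃ e : Finset (Fin n) × Finset (Fin n),
      e ∈ edges k G x ∧
      (clauseVars a.1 \ e.1).card + (clauseVars a.2 \ e.2).card + 1 ≤ k - 1 := by
    intro a ha
    rcases Finset.mem_product.1 ha with ⟨ha1, ha2⟩
    rcases Finset.mem_filter.1 ha1 with ⟨h1G, h1x⟩
    rcases Finset.mem_filter.1 ha2 with ⟨h2G, h2x⟩
    have hS1 : (clauseVars a.1).card = k := (hG _ h1G).2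
    have hS2 : (clauseVars a.2).card = k := (hG _ h2G).2
    have hxS1 : x ∈ clauseVars a.1 := mem_clauseVars.2 ⟨_, h1x⟩
    have hxS2 : x ∈ clauseVars a.2 := mem_clauseVars.2 ⟨_, h2x⟩
    have hfS : fx G x (clauseVars a.1) := ⟨a.1, h1G, rfl, h1x⟩
    have hfS' : ¬ fx G x (clauseVars a.2) := by
      rintro ⟨C, hCG, hCv, hCx⟩
      have heq : C = a.2 := hs C hCG a.2 h2G hCv
      have := polarity_unique (hG _ h2G) (heq ▸ hCx) h2x
      simp at this
    have hm : (clauseVars a.1 \ clauseVars a.2).card ≤ k - 1 := by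
      have hsub : clauseVars a.1 \ clauseVars a.2 ⊆ (clauseVars a.1).erase x := by
        intro t ht
        rcases Finset.mem_sdiff.1 ht with ⟨htS, htS'⟩
        exact Finset.mem_erase.2 ⟨fun h => htS' (h ▸ hxS2), htS⟩
      calc (clauseVars a.1 \ clauseVars a.2).card ≤ ((clauseVars a.1).erase x).card :=
            Finset.card_le_card hsub
        _ = k - 1 := by rw [Finset.card_erase_of_mem hxS1, hS1]
    obtain ⟨T, T', p1, p2, p3, p4, p5, p6, p7, p8, p9⟩ :=
      flip_exists (fx G x) x _ _ _ hS1 hS2 hxS1 hxS2 rfl hfS hfS'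
    refine ⟨(T, T'), ?_, ?_⟩
    swap
    · show (clauseVars a.1 \ T).card + (clauseVars a.2 \ T').card + 1 ≤ k - 1
      omega
    refine Finset.mem_filter.2 ⟨Finset.mem_product.2
      ⟨Finset.mem_powersetCard.2 ⟨Finset.subset_univ _, p1⟩,
       Finset.mem_powersetCard.2 ⟨Finset.subset_univ _, p2⟩⟩, p3, p4, p5, p6, p7, p8⟩
  have hex' : ∀ a : SatClause (Fin n) × SatClause (Fin n),
      ∃ e : Finset (Fin n) × Finset (Fin n), a ∈ s →
      e ∈ edges k G x ∧
      (clauseVars a.1 \ e.1).card + (clauseVars a.2 \ e.2).card + 1 ≤ k - 1 := by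
    intro a
    by_cases h : a ∈ s
    · exact (hex a h).imp (fun e he _ => he)
    · exact ⟨(∅, ∅), fun h' => absurd h' h⟩
  choose E hEspec' using hex'
  have hEspec : ∀ a ∈ s, E a ∈ edges k G x ∧
      (clauseVars a.1 \ (E a).1).card + (clauseVars a.2 \ (E a).2).card + 1 ≤ k - 1 :=
    fun a ha => hEspec' a ha
  set cert : SatClause (Fin n) × SatClause (Fin n) →
      (Finset (Fin n) × Finset (Fin n)) × (Finset (Fin n) × Finset (Fin n)) :=
    fun a => (((E a).1 \ clauseVars a.1, (E a).2 \ clauseVars a.2),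
              (clauseVars a.1 \ (E a).1, clauseVars a.2 \ (E a).2)) with hcdef
  have hmain : s.card ≤ (edges k G x).card * (2^k * (2^k * ((k-1)^2 * n^(k-2)))) := by
    refine count_helper s E cert (edges k G x)
      (fun e => (e.1.powerset ×ˢ e.2.powerset) ×ˢ smallPairs k n)
      (fun a ha => (hEspec a ha).1) ?_ ?_ _ ?_
    · intro a ha
      obtain ⟨hmem, hbd⟩ := hEspec a ha
      refine Finset.mem_product.2 ⟨Finset.mem_product.2
        ⟨Finset.mem_powerset.2 Finset.sdiff_subset, Finset.mem_powerset.2 Finset.sdiff_subset⟩, ?_⟩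
      refine Finset.mem_biUnion.2 ⟨((clauseVars a.1 \ (E a).1).card,
        (clauseVars a.2 \ (E a).2).card), ?_, ?_⟩
      · refine Finset.mem_filter.2 ⟨Finset.mem_product.2
          ⟨Finset.mem_range.2 (by omega), Finset.mem_range.2 (by omega)⟩, by
            simp only []
            omega⟩
      · exact Finset.mem_product.2 ⟨Finset.mem_powersetCard.2 ⟨Finset.subset_univ _, rfl⟩,
          Finset.mem_powersetCard.2 ⟨Finset.subset_univ _, rfl⟩⟩
    · intro a ha b hb hkey hcert
      have hEa := hEspec a ha
      rcases Finset.mem_product.1 ha with ⟨ha1, ha2⟩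
      rcases Finset.mem_product.1 hb with ⟨hb1, hb2⟩
      have c1 : (E a).1 \ clauseVars a.1 = (E b).1 \ clauseVars b.1 :=
        congrArg (Prod.fst ∘ Prod.fst) hcert
      have c2 : (E a).2 \ clauseVars a.2 = (E b).2 \ clauseVars b.2 :=
        congrArg (Prod.snd ∘ Prod.fst) hcert
      have c3 : clauseVars a.1 \ (E a).1 = clauseVars b.1 \ (E b).1 :=
        congrArg (Prod.fst ∘ Prod.snd) hcert
      have c4 : clauseVars a.2 \ (E a).2 = clauseVars b.2 \ (E b).2 :=
        congrArg (Prod.snd ∘ Prod.snd) hcert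
      have hv1 : clauseVars a.1 = clauseVars b.1 := by
        have := recover (clauseVars a.1) (E a).1
        rw [c1, c3, hkey] at this
        rw [← this, recover]
      have hv2 : clauseVars a.2 = clauseVars b.2 := by
        have := recover (clauseVars a.2) (E a).2
        rw [c2, c4, hkey] at this
        rw [← this, recover]
      have e1 : a.1 = b.1 := hs a.1 (Finset.mem_of_mem_filter _ ha1) b.1
        (Finset.mem_of_mem_filter _ hb1) hv1
      have e2 : a.2 = b.2 := hs a.2 (Finset.mem_of_mem_filter _ ha2) b.2
        (Finset.mem_of_mem_filter _ hb2) hv2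
      exact Prod.ext e1 e2
    · intro e he
      rcases Finset.mem_product.1 (Finset.mem_of_mem_filter _ he) with ⟨he1, he2⟩
      have hc1 : e.1.card = k := (Finset.mem_powersetCard.1 he1).2
      have hc2 : e.2.card = k := (Finset.mem_powersetCard.1 he2).2
      rw [Finset.card_product, Finset.card_product, Finset.card_powerset,
        Finset.card_powerset, hc1, hc2, mul_assoc]
      exact Nat.mul_le_mul_left _ (Nat.mul_le_mul_left _ (smallPairs_card hn hk))
  calc (Aset G x).card * (Bset G x).card = s.card := (Finset.card_product _ _).symm
    _ ≤ _ := hmain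

lemma edges_card (hG : IsKFormula k G) (hs : SimpleFormula G) (x : Fin n) :
    (edges k G x).card ≤
      ((missingSets k G).filter (fun U => x ∈ U)).card * (n * k) + (confPairs k G x).card := by
  classical
  rw [← Finset.card_filter_add_card_filter_not
    (p := fun e : Finset (Fin n) × Finset (Fin n) => e.2 ∈ presentSets G) (s := edges k G x)]
  have hedge : ∀ e ∈ edges k G x, e.1.card = k ∧ e.2.card = k ∧ x ∈ e.1 ∧ x ∈ e.2 ∧
      (e.1 \ e.2).card = 1 ∧ (e.2 \ e.1).card = 1 ∧ fx G x e.1 ∧ ¬ fx G x e.2 := by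
    intro e he
    rcases Finset.mem_filter.1 he with ⟨hmem, h1, h2, h3, h4, h5, h6⟩
    rcases Finset.mem_product.1 hmem with ⟨hm1, hm2⟩
    exact ⟨(Finset.mem_powersetCard.1 hm1).2, (Finset.mem_powersetCard.1 hm2).2,
      h1, h2, h3, h4, h5, h6⟩
  have hN : ((edges k G x).filter (fun e => ¬ e.2 ∈ presentSets G)).card ≤
      ((missingSets k G).filter (fun U => x ∈ U)).card * (n * k) := by
    refine count_helper _ Prod.snd (fun e => (e.1 \ e.2, e.2 \ e.1))
      ((missingSets k G).filter (fun U => x ∈ U))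
      (fun U => ((Finset.univ : Finset (Fin n)).image (fun u => ({u} : Finset (Fin n)))) ×ˢ
        (U.image (fun v => ({v} : Finset (Fin n))))) ?_ ?_ ?_ _ ?_
    · intro e he
      rcases Finset.mem_filter.1 he with ⟨hedges, hnp⟩
      obtain ⟨_, hc2, _, hx2, _, _, _, _⟩ := hedge e hedges
      refine Finset.mem_filter.2 ⟨Finset.mem_filter.2 ⟨?_, hnp⟩, hx2⟩
      exact Finset.mem_powersetCard.2 ⟨Finset.subset_univ _, hc2⟩
    · intro e he
      rcases Finset.mem_filter.1 he with ⟨hedges, _⟩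
      obtain ⟨_, _, _, _, hd1, hd2, _, _⟩ := hedge e hedges
      obtain ⟨u, hu⟩ := Finset.card_eq_one.1 hd1
      obtain ⟨v, hv⟩ := Finset.card_eq_one.1 hd2
      have hvmem : v ∈ e.2 := by
        have : v ∈ e.2 \ e.1 := hv ▸ Finset.mem_singleton_self v
        exact (Finset.mem_sdiff.1 this).1
      refine Finset.mem_product.2 ⟨?_, ?_⟩
      · exact Finset.mem_image.2 ⟨u, Finset.mem_univ u, hu.symm⟩
      · exact Finset.mem_image.2 ⟨v, hvmem, hv.symm⟩
    · intro e he f hf hk hc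
      have c1 : e.1 \ e.2 = f.1 \ f.2 := congrArg Prod.fst hc
      have c2 : e.2 \ e.1 = f.2 \ f.1 := congrArg Prod.snd hc
      have h1 : e.1 = f.1 := by
        have := recover e.1 e.2
        rw [c1, c2, hk] at this
        rw [← this, recover]
      exact Prod.ext h1 hk
    · intro U hU
      have hUcard : U.card = k :=
        (Finset.mem_powersetCard.1 (Finset.mem_filter.1 (Finset.mem_of_mem_filter _ hU)).1).2
      rw [Finset.card_product]
      refine Nat.mul_le_mul ?_ ?_
      · exact (Finset.card_image_le).trans (by simp)
      · exact (Finset.card_image_le).trans (by rw [hUcard])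
  have hP : ((edges k G x).filter (fun e => e.2 ∈ presentSets G)).card ≤
      (confPairs k G x).card := by
    have hex1 : ∀ e : Finset (Fin n) × Finset (Fin n),
        ∃ C, e ∈ (edges k G x).filter (fun e => e.2 ∈ presentSets G) →
          C ∈ G ∧ clauseVars C = e.1 ∧ (x, minpol G x) ∈ C := by
      intro e
      by_cases h : e ∈ (edges k G x).filter (fun e => e.2 ∈ presentSets G)
      · obtain ⟨_, _, _, _, _, _, hfx, _⟩ := hedge e (Finset.mem_of_mem_filter _ h)
        obtain ⟨C, hCG, hCv, hCx⟩ := hfx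
        exact ⟨C, fun _ => ⟨hCG, hCv, hCx⟩⟩
      · exact ⟨∅, fun h' => absurd h' h⟩
    have hex2 : ∀ e : Finset (Fin n) × Finset (Fin n),
        ∃ C, e ∈ (edges k G x).filter (fun e => e.2 ∈ presentSets G) →
          C ∈ G ∧ clauseVars C = e.2 ∧ (x, !(minpol G x)) ∈ C := by
      intro e
      by_cases h : e ∈ (edges k G x).filter (fun e => e.2 ∈ presentSets G)
      · rcases Finset.mem_filter.1 h with ⟨hedges, hpres⟩
        obtain ⟨_, _, _, hx2, _, _, _, hnfx⟩ := hedge e hedges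
        obtain ⟨C, hCG, hCv⟩ := Finset.mem_image.1 hpres
        have hxC : x ∈ clauseVars C := hCv ▸ hx2
        obtain ⟨b, hb⟩ := mem_clauseVars.1 hxC
        have hbne : b ≠ minpol G x := by
          intro hbe
          exact hnfx ⟨C, hCG, hCv, hbe ▸ hb⟩
        have hbval : b = !(minpol G x) := by
          cases b <;> cases hmp : minpol G x <;> simp_all
        exact ⟨C, fun _ => ⟨hCG, hCv, hbval ▸ hb⟩⟩
      · exact ⟨∅, fun h' => absurd h' h⟩
    choose F1 hF1 using hex1
    choose F2 hF2 using hex2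
    refine Finset.card_le_card_of_injOn (fun e => (F1 e, F2 e)) ?_ ?_
    · intro e he
      obtain ⟨hF1G, hF1v, hF1x⟩ := hF1 e he
      obtain ⟨hF2G, hF2v, hF2x⟩ := hF2 e he
      obtain ⟨hc1, hc2, _, _, _, hd2, _, _⟩ := hedge e (Finset.mem_of_mem_filter _ he)
      refine Finset.mem_filter.2 ⟨Finset.mem_product.2 ⟨hF1G, hF2G⟩, hF1x, hF2x, ?_⟩
      rw [hF1v, hF2v]
      have := Finset.card_sdiff_add_card e.2 e.1
      rw [hd2, hc1] at this
      rw [Finset.union_comm, ← this]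
      omega
    · intro e he f hf hc
      have hc' : (F1 e, F2 e) = (F1 f, F2 f) := hc
      have hcf : F1 e = F1 f := congrArg Prod.fst hc'
      have hcs : F2 e = F2 f := congrArg Prod.snd hc'
      have h1 : e.1 = f.1 := by
        rw [← (hF1 e he).2.1, ← (hF1 f hf).2.1, hcf]
      have h2 : e.2 = f.2 := by
        rw [← (hF2 e he).2.1, ← (hF2 f hf).2.1, hcs]
      exact Prod.ext h1 h2
  omega

lemma filter_univ_mem (U : Finset (Fin n)) :
    (Finset.univ.filter (fun x => x ∈ U)) = U := by
  ext a; simp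

lemma sum_missing (hG : IsKFormula k G) :
    ∑ x : Fin n, ((missingSets k G).filter (fun U => x ∈ U)).card ≤
      k * (missingSets k G).card := by
  classical
  have h1 : ∀ x : Fin n, ((missingSets k G).filter (fun U => x ∈ U)).card =
      ∑ U ∈ missingSets k G, if x ∈ U then 1 else 0 := fun x => Finset.card_filter _ _
  calc ∑ x : Fin n, ((missingSets k G).filter (fun U => x ∈ U)).card
      = ∑ x : Fin n, ∑ U ∈ missingSets k G, if x ∈ U then 1 else 0 :=
        Finset.sum_congr rfl (fun x _ => h1 x)
    _ = ∑ U ∈ missingSets k G, ∑ x : Fin n, if x ∈ U then 1 else 0 := Finset.sum_comm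
    _ = ∑ U ∈ missingSets k G, U.card := by
        refine Finset.sum_congr rfl (fun U _ => ?_)
        rw [← Finset.card_filter, filter_univ_mem]
    _ ≤ ∑ _U ∈ missingSets k G, k := by
        refine Finset.sum_le_sum (fun U hU => ?_)
        have := (Finset.mem_powersetCard.1 (Finset.mem_of_mem_filter _ hU)).2
        omega
    _ = k * (missingSets k G).card := by rw [Finset.sum_const, smul_eq_mul, mul_comm]

lemma sum_conf (hG : IsKFormula k G) :
    ∑ x : Fin n, (confPairs k G x).card ≤ k * (confAll k G).card := by
  classical
  have hsub : ∀ x : Fin n, confPairs k G x ⊆ confAll k G := by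
    intro x p hp
    rcases Finset.mem_filter.1 hp with ⟨hmem, h1, h2, h3⟩
    exact Finset.mem_filter.2 ⟨hmem, h3, x, minpol G x, h1, h2⟩
  have h1 : ∀ x : Fin n, (confPairs k G x).card =
      ∑ p ∈ confAll k G, if p ∈ confPairs k G x then 1 else 0 := by
    intro x
    rw [← Finset.card_filter]
    congr 1
    ext p
    simp only [Finset.mem_filter]
    exact ⟨fun h => ⟨hsub x h, h⟩, fun h => h.2⟩
  calc ∑ x : Fin n, (confPairs k G x).card
      = ∑ x : Fin n, ∑ p ∈ confAll k G, if p ∈ confPairs k G x then 1 else 0 :=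
        Finset.sum_congr rfl (fun x _ => h1 x)
    _ = ∑ p ∈ confAll k G, ∑ x : Fin n, if p ∈ confPairs k G x then 1 else 0 := Finset.sum_comm
    _ ≤ ∑ p ∈ confAll k G, k := by
        refine Finset.sum_le_sum (fun p hp => ?_)
        rw [← Finset.card_filter]
        have hp1G : p.1 ∈ G := (Finset.mem_product.1 (Finset.mem_of_mem_filter _ hp)).1
        have hsub2 : (Finset.univ.filter (fun x => p ∈ confPairs k G x)) ⊆ clauseVars p.1 := by
          intro x hx
          have hpx := (Finset.mem_filter.1 hx).2
          have := (Finset.mem_filter.1 hpx).2.1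
          exact mem_clauseVars.2 ⟨_, this⟩
        calc _ ≤ (clauseVars p.1).card := Finset.card_le_card hsub2
          _ = k := (hG _ hp1G).2
    _ = k * (confAll k G).card := by rw [Finset.sum_const, smul_eq_mul, mul_comm]

lemma simple_sub {S : SatFormula (Fin n)} (hs : SimpleFormula G) (hsub : S ⊆ G) :
    SimpleFormula S :=
  fun C hC C' hC' h => hs C (hsub hC) C' (hsub hC') h

lemma filter_sub_card (hG : IsKFormula k G) (hs : SimpleFormula G) (W : Finset (Fin n)) :
    (G.filter (fun C => clauseVars C ⊆ W)).card ≤ W.card.choose k := by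
  classical
  calc (G.filter (fun C => clauseVars C ⊆ W)).card
      ≤ (Finset.powersetCard k W).card := by
        refine Finset.card_le_card_of_injOn clauseVars ?_ ?_
        · intro C hC
          rcases Finset.mem_filter.1 hC with ⟨hCG, hCsub⟩
          exact Finset.mem_powersetCard.2 ⟨hCsub, (hG _ hCG).2⟩
        · intro C hC C' hC' h
          exact hs C (Finset.mem_of_mem_filter _ hC) C' (Finset.mem_of_mem_filter _ hC') h
    _ = W.card.choose k := Finset.card_powersetCard _ _

lemma simplex_good (hk : 2 ≤ k) (hG : IsKFormula k G) (hs : SimpleFormula G)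
    (T : Finset (Fin n)) (hT : T.card = k + 1) (hfull : fullT k G T)
    {C C' : SatClause (Fin n)} (hC : C ∈ simplexAt G T) (hC' : C' ∈ simplexAt G T)
    {x : Fin n} {b : Bool} (hxb : (x, b) ∈ C) (hxb' : (x, !b) ∈ C') :
    simplexAt G T ∈ nuSimplices k G := by
  classical
  have hsubG : simplexAt G T ⊆ G := Finset.filter_subset _ _
  have hinj : ∀ C₁ ∈ simplexAt G T, ∀ C₂ ∈ simplexAt G T,
      clauseVars C₁ = clauseVars C₂ → C₁ = C₂ :=
    fun C₁ h₁ C₂ h₂ h => hs C₁ (hsubG h₁) C₂ (hsubG h₂) h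
  have himg : (simplexAt G T).image clauseVars = Finset.powersetCard k T := by
    apply Finset.Subset.antisymm
    · intro U hU
      rcases Finset.mem_image.1 hU with ⟨C₀, hC₀, rfl⟩
      rcases Finset.mem_filter.1 hC₀ with ⟨hC₀G, hC₀sub⟩
      exact Finset.mem_powersetCard.2 ⟨hC₀sub, (hG _ hC₀G).2⟩
    · intro U hU
      rcases Finset.mem_image.1 (hfull U hU) with ⟨C₀, hC₀G, hv⟩
      refine Finset.mem_image.2 ⟨C₀, Finset.mem_filter.2 ⟨hC₀G, ?_⟩, hv⟩
      rw [hv]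
      exact (Finset.mem_powersetCard.1 hU).1
  have hcard : (simplexAt G T).card = k + 1 := by
    rw [← Finset.card_image_of_injOn (fun C₁ h₁ C₂ h₂ h => hinj C₁ h₁ C₂ h₂ h), himg,
      Finset.card_powersetCard, hT, Nat.choose_succ_self_right]
  have hvarseq : formulaVars (simplexAt G T) = T := by
    apply Finset.Subset.antisymm
    · intro t ht
      rcases Finset.mem_biUnion.1 ht with ⟨C₀, hC₀, htv⟩
      exact (Finset.mem_filter.1 hC₀).2 htv
    · intro t ht
      have h2 : 1 < T.card := by omega
      obtain ⟨u, huT, hut⟩ := Finset.exists_mem_ne h2 t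
      have hUmem : T.erase u ∈ Finset.powersetCard k T := by
        refine Finset.mem_powersetCard.2 ⟨Finset.erase_subset _ _, ?_⟩
        rw [Finset.card_erase_of_mem huT, hT]
        omega
      rcases Finset.mem_image.1 (hfull _ hUmem) with ⟨C₀, hC₀G, hv⟩
      refine Finset.mem_biUnion.2 ⟨C₀, Finset.mem_filter.2 ⟨hC₀G, ?_⟩, ?_⟩
      · rw [hv]; exact Finset.erase_subset _ _
      · rw [hv]; exact Finset.mem_erase.2 ⟨fun h => hut h.symm, ht⟩
  refine Finset.mem_filter.2 ⟨Finset.mem_univ _, hsubG, simple_sub hs hsubG, hcard, ?_, ?_⟩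
  · rw [hvarseq, hT]
  · intro hU
    apply hU x
    cases b
    · exact ⟨⟨C', hC', by simpa using hxb'⟩, ⟨C, hC, hxb⟩⟩
    · exact ⟨⟨C, hC, hxb⟩, ⟨C', hC', by simpa using hxb'⟩⟩

lemma confAll_card (hk : 2 ≤ k) (hn : 1 ≤ n) (hG : IsKFormula k G) (hs : SimpleFormula G) :
    (confAll k G).card ≤ (nuSimplices k G).card * (k+1)^2 +
      ((missingSets k G).card * n) * (k+1)^2 := by
  classical
  rw [← Finset.card_filter_add_card_filter_not
    (p := fun p : SatClause (Fin n) × SatClause (Fin n) =>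
      fullT k G (clauseVars p.1 ∪ clauseVars p.2)) (s := confAll k G)]
  have hmemAll : ∀ p ∈ confAll k G, p.1 ∈ G ∧ p.2 ∈ G ∧
      (clauseVars p.1 ∪ clauseVars p.2).card = k + 1 ∧
      ∃ x b, (x, b) ∈ p.1 ∧ (x, !b) ∈ p.2 := by
    intro p hp
    rcases Finset.mem_filter.1 hp with ⟨hmem, h1, h2⟩
    rcases Finset.mem_product.1 hmem with ⟨hp1, hp2⟩
    exact ⟨hp1, hp2, h1, h2⟩
  have hfullpart : ((confAll k G).filter (fun p =>
      fullT k G (clauseVars p.1 ∪ clauseVars p.2))).card ≤ (nuSimplices k G).card * (k+1)^2 := by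
    refine count_helper _ (fun p => simplexAt G (clauseVars p.1 ∪ clauseVars p.2)) id
      (nuSimplices k G) (fun S => S ×ˢ S) ?_ ?_ (fun a _ b _ _ h => h) _ ?_
    · intro p hp
      rcases Finset.mem_filter.1 hp with ⟨hpAll, hpfull⟩
      obtain ⟨hp1, hp2, hcard, x, b, hb1, hb2⟩ := hmemAll p hpAll
      exact simplex_good hk hG hs _ hcard hpfull
        (Finset.mem_filter.2 ⟨hp1, Finset.subset_union_left⟩)
        (Finset.mem_filter.2 ⟨hp2, Finset.subset_union_right⟩) hb1 hb2
    · intro p hp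
      rcases Finset.mem_filter.1 hp with ⟨hpAll, _⟩
      obtain ⟨hp1, hp2, _, _⟩ := hmemAll p hpAll
      exact Finset.mem_product.2
        ⟨Finset.mem_filter.2 ⟨hp1, Finset.subset_union_left⟩,
         Finset.mem_filter.2 ⟨hp2, Finset.subset_union_right⟩⟩
    · intro S hS
      have hcard : S.card = k + 1 := (Finset.mem_filter.1 hS).2.2.2.1
      rw [Finset.card_product, hcard, pow_two]
  have hnonfull : ((confAll k G).filter (fun p =>
      ¬ fullT k G (clauseVars p.1 ∪ clauseVars p.2))).card ≤
      ((missingSets k G).card * n) * (k+1)^2 := by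
    have hex : ∀ p : SatClause (Fin n) × SatClause (Fin n),
        ∃ q : Finset (Fin n) × Fin n,
        p ∈ (confAll k G).filter (fun p => ¬ fullT k G (clauseVars p.1 ∪ clauseVars p.2)) →
        q.1 ∈ missingSets k G ∧ insert q.2 q.1 = clauseVars p.1 ∪ clauseVars p.2 := by
      intro p
      by_cases hp : p ∈ (confAll k G).filter
        (fun p => ¬ fullT k G (clauseVars p.1 ∪ clauseVars p.2))
      · rcases Finset.mem_filter.1 hp with ⟨hpAll, hpnf⟩
        obtain ⟨_, _, hTcard, _⟩ := hmemAll p hpAll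
        rw [fullT] at hpnf
        push_neg at hpnf
        obtain ⟨U, hUm, hUnp⟩ := hpnf
        rcases Finset.mem_powersetCard.1 hUm with ⟨hUsub, hUcard⟩
        have hUmiss : U ∈ missingSets k G := Finset.mem_filter.2
          ⟨Finset.mem_powersetCard.2 ⟨Finset.subset_univ _, hUcard⟩, hUnp⟩
        have hne : ((clauseVars p.1 ∪ clauseVars p.2) \ U).Nonempty := by
          rw [← Finset.card_pos, Finset.card_sdiff_of_subset hUsub, hTcard, hUcard]
          omega
        obtain ⟨v, hv⟩ := hne
        rcases Finset.mem_sdiff.1 hv with ⟨hvT, hvU⟩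
        refine ⟨(U, v), fun _ => ⟨hUmiss, ?_⟩⟩
        refine Finset.eq_of_subset_of_card_le ?_ ?_
        · intro a ha
          rcases Finset.mem_insert.1 ha with rfl | haU
          · exact hvT
          · exact hUsub haU
        · rw [hTcard, Finset.card_insert_of_notMem hvU, hUcard]
      · exact ⟨(∅, ⟨0, hn⟩), fun h' => absurd h' hp⟩
    choose Q hQ using hex
    have hbound := count_helper
      ((confAll k G).filter (fun p => ¬ fullT k G (clauseVars p.1 ∪ clauseVars p.2)))
      Q id ((missingSets k G) ×ˢ (Finset.univ : Finset (Fin n)))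
      (fun q => (G.filter (fun C => clauseVars C ⊆ insert q.2 q.1)) ×ˢ
        (G.filter (fun C => clauseVars C ⊆ insert q.2 q.1)))
      ?_ ?_ (fun a _ b _ _ h => h) ((k+1)^2) ?_
    · calc _ ≤ ((missingSets k G) ×ˢ (Finset.univ : Finset (Fin n))).card * (k+1)^2 := hbound
        _ = ((missingSets k G).card * n) * (k+1)^2 := by
          rw [Finset.card_product, Finset.card_univ, Fintype.card_fin]
    · intro p hp
      exact Finset.mem_product.2 ⟨(hQ p hp).1, Finset.mem_univ _⟩
    · intro p hp
      have hins := (hQ p hp).2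
      have hp1 : p.1 ∈ G := (hmemAll p (Finset.mem_of_mem_filter _ hp)).1
      have hp2 : p.2 ∈ G := (hmemAll p (Finset.mem_of_mem_filter _ hp)).2.1
      refine Finset.mem_product.2 ⟨Finset.mem_filter.2 ⟨hp1, ?_⟩, Finset.mem_filter.2 ⟨hp2, ?_⟩⟩
      · rw [hins]; exact Finset.subset_union_left
      · rw [hins]; exact Finset.subset_union_right
    · intro q hq
      have hq1 : q.1.card = k :=
        (Finset.mem_powersetCard.1 (Finset.mem_of_mem_filter _
          (Finset.mem_product.1 hq).1)).2
      have hfc : (G.filter (fun C => clauseVars C ⊆ insert q.2 q.1)).card ≤ k + 1 := by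
        calc (G.filter (fun C => clauseVars C ⊆ insert q.2 q.1)).card
            ≤ (insert q.2 q.1).card.choose k := filter_sub_card hG hs _
          _ ≤ (k+1).choose k := Nat.choose_le_choose k (by
              have := Finset.card_insert_le q.2 q.1
              omega)
          _ = k + 1 := Nat.choose_succ_self_right k
      rw [Finset.card_product, pow_two]
      exact Nat.mul_le_mul hfc hfc
  omega

theorem master (hk : 2 ≤ k) (hn : 1 ≤ n) (hG : IsKFormula k G) (hs : SimpleFormula G) :
    ∃ D ⊆ G, UnateFormula (G \ D) ∧
      D.card ^ 2 ≤ 4^k * (k+1)^6 *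
        (n^k * (missingSets k G).card + n^(k-1) * (nuSimplices k G).card) := by
  classical
  refine ⟨Dset G, Finset.filter_subset _ _, unate_GD, ?_⟩
  set a := (missingSets k G).card with hadef
  set b := (nuSimplices k G).card with hbdef
  set CE := 2^k * (2^k * ((k-1)^2 * n^(k-2))) with hCEdef
  have h4 : ∀ x : Fin n, ((Aset G x).card)^2 ≤
      (((missingSets k G).filter (fun U => x ∈ U)).card * (n*k) + (confPairs k G x).card) * CE := by
    intro x
    calc ((Aset G x).card)^2 = (Aset G x).card * (Aset G x).card := sq _
      _ ≤ (Aset G x).card * (Bset G x).card := Nat.mul_le_mul_left _ (A_le_B x)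
      _ ≤ (edges k G x).card * CE := perx hk hn hG hs x
      _ ≤ _ := Nat.mul_le_mul_right _ (edges_card hG hs x)
  have h5 : ∑ x : Fin n, ((Aset G x).card)^2 ≤
      ((k * a) * (n*k) + k * (confAll k G).card) * CE := by
    calc ∑ x : Fin n, ((Aset G x).card)^2
        ≤ ∑ x : Fin n, ((((missingSets k G).filter (fun U => x ∈ U)).card * (n*k) +
            (confPairs k G x).card) * CE) :=
          Finset.sum_le_sum (fun x _ => h4 x)
      _ = ((∑ x : Fin n, ((missingSets k G).filter (fun U => x ∈ U)).card) * (n*k) +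
            ∑ x : Fin n, (confPairs k G x).card) * CE := by
          rw [← Finset.sum_mul, Finset.sum_add_distrib, Finset.sum_mul]
      _ ≤ _ := by
          refine Nat.mul_le_mul_right _ (Nat.add_le_add ?_ ?_)
          · exact Nat.mul_le_mul_right _ (sum_missing hG)
          · exact sum_conf hG
  have h6 : (confAll k G).card ≤ b * (k+1)^2 + (a*n) * (k+1)^2 := confAll_card hk hn hG hs
  have h7 : (Dset G).card ^ 2 ≤ n * ∑ x : Fin n, ((Aset G x).card)^2 := by
    calc (Dset G).card ^ 2 ≤ (∑ x : Fin n, (Aset G x).card)^2 :=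
          Nat.pow_le_pow_left Dset_card 2
      _ ≤ (Finset.univ : Finset (Fin n)).card * ∑ x : Fin n, ((Aset G x).card)^2 :=
          sq_sum_le_card_mul_sum_sq
      _ = n * ∑ x : Fin n, ((Aset G x).card)^2 := by
          rw [Finset.card_univ, Fintype.card_fin]
  have h8 : (Dset G).card ^ 2 ≤
      n * (((k * a) * (n*k) + k * (b * (k+1)^2 + (a*n) * (k+1)^2)) * CE) := by
    refine h7.trans ?_
    refine Nat.mul_le_mul_left _ (h5.trans ?_)
    refine Nat.mul_le_mul_right _ (Nat.add_le_add_left ?_ _)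
    exact Nat.mul_le_mul_left _ h6
  refine h8.trans ?_
  have f1 : n^(k-2) * n = n^(k-1) := by
    rw [← pow_succ]
    congr 1
    omega
  have f2 : n^(k-1) * n = n^k := by
    rw [← pow_succ]
    congr 1
    omega
  have h44 : (2:ℕ)^k * 2^k = 4^k := by
    rw [← mul_pow]
    norm_num
  have hstep : n * (((k * a) * (n*k) + k * (b * (k+1)^2 + (a*n) * (k+1)^2)) * CE)
      = (2^k*2^k) * ((k-1)^2) * ((k*k + k*(k+1)^2) * (n^(k-2)*n*n) * a
          + (k*(k+1)^2) * (n^(k-2)*n) * b) := by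
    rw [hCEdef]
    ring
  have hq0 : n^(k-2)*n*n = n^k := by rw [f1, f2]
  rw [hstep, hq0, f1, h44]
  have hc1 : (k-1)^2 * (k*k + k*(k+1)^2) ≤ (k+1)^6 := by
    calc (k-1)^2 * (k*k + k*(k+1)^2)
        ≤ (k+1)^2 * ((k+1)*(k+1)^2 + (k+1)*(k+1)^2) := by
          refine Nat.mul_le_mul (Nat.pow_le_pow_left (by omega) 2) (Nat.add_le_add ?_ ?_)
          · calc k*k ≤ (k+1)*(k+1) := Nat.mul_le_mul (by omega) (by omega)
              _ ≤ (k+1)*(k+1)^2 := by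
                refine Nat.mul_le_mul_left _ ?_
                calc k+1 = (k+1)^1 := (pow_one _).symm
                  _ ≤ (k+1)^2 := Nat.pow_le_pow_right (by omega) (by omega)
          · exact Nat.mul_le_mul_right _ (by omega)
      _ = 2 * (k+1)^5 := by ring
      _ ≤ (k+1) * (k+1)^5 := Nat.mul_le_mul_right _ (by omega)
      _ = (k+1)^6 := by ring
  have hc2 : (k-1)^2 * (k*(k+1)^2) ≤ (k+1)^6 := by
    calc (k-1)^2 * (k*(k+1)^2)
        ≤ (k+1)^2 * ((k+1)*(k+1)^2) := by
          refine Nat.mul_le_mul (Nat.pow_le_pow_left (by omega) 2)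
            (Nat.mul_le_mul_right _ (by omega))
      _ = (k+1)^5 := by ring
      _ ≤ (k+1)^6 := Nat.pow_le_pow_right (by omega) (by omega)
  calc 4^k * ((k-1)^2) * ((k*k + k*(k+1)^2) * n^k * a + (k*(k+1)^2) * n^(k-1) * b)
      = 4^k * (((k-1)^2 * (k*k + k*(k+1)^2)) * (n^k * a)
          + ((k-1)^2 * (k*(k+1)^2)) * (n^(k-1) * b)) := by ring
    _ ≤ 4^k * ((k+1)^6 * (n^k * a) + (k+1)^6 * (n^(k-1) * b)) := by
        refine Nat.mul_le_mul_left _ (Nat.add_le_add ?_ ?_)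
        · exact Nat.mul_le_mul_right _ hc1
        · exact Nat.mul_le_mul_right _ hc2
    _ = 4^k * (k+1)^6 * (n^k * a + n^(k-1) * b) := by ring

theorem far_from_unate_many_simplices' (k : ℕ) (hk : 2 ≤ k) (ρ : ℝ) (hρ : 0 < ρ) :
    ∃ ε : ℝ, 0 < ε ∧ ∃ c : ℝ, 0 < c ∧ ∃ n₀ : ℕ, ∀ n ≥ n₀,
      ∀ G : SatFormula (Fin n), IsKFormula k G → SimpleFormula G →
      (1 - ε) * (n.choose k : ℝ) ≤ G.card →
      (¬ ∃ D ⊆ G, (D.card : ℝ) ≤ ρ * n ^ k ∧ UnateFormula (G \ D)) →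
      c * n ^ (k + 1) ≤
        (Set.ncard {S : SatFormula (Fin n) | S ⊆ G ∧ SimpleFormula S ∧
          S.card = k + 1 ∧ (formulaVars S).card = k + 1 ∧ ¬ UnateFormula S} : ℝ) := by
  classical
  set CK : ℝ := 4^k * (k+1)^6 with hCK
  have hCKpos : 0 < CK := by positivity
  set ε : ℝ := ρ^2/(2*CK) with hε
  have hεpos : 0 < ε := by positivity
  refine ⟨ε, hεpos, ε, hεpos, 1, ?_⟩
  intro n hn G hGk hsimple hGcard hfar
  by_contra hcon
  push_neg at hcon
  have hset : {S : SatFormula (Fin n) | S ⊆ G ∧ SimpleFormula S ∧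
      S.card = k + 1 ∧ (formulaVars S).card = k + 1 ∧ ¬ UnateFormula S} =
      ↑(nuSimplices k G) := by
    ext S
    simp [nuSimplices]
  rw [hset, Set.ncard_coe_finset] at hcon
  obtain ⟨D, hDsub, hDunate, hDbound⟩ := master hk hn hGk hsimple
  have hfarD : ρ * (n:ℝ)^k < D.card := by
    by_contra hle
    push_neg at hle
    exact hfar ⟨D, hDsub, hle, hDunate⟩
  have hmisseq := missing_card hGk hsimple
  have hchoose : ((n.choose k : ℕ) : ℝ) ≤ (n:ℝ)^k := by
    exact_mod_cast Nat.choose_le_pow n k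
  have hmissR : ((missingSets k G).card : ℝ) ≤ ε * (n:ℝ)^k := by
    have hcast : ((missingSets k G).card : ℝ) + G.card = (n.choose k : ℝ) := by
      exact_mod_cast congrArg (fun m : ℕ => (m : ℝ)) hmisseq
    have h1 : ((missingSets k G).card : ℝ) ≤ ε * (n.choose k : ℝ) := by linarith
    have h2 : ε * (n.choose k : ℝ) ≤ ε * (n:ℝ)^k :=
      mul_le_mul_of_nonneg_left hchoose hεpos.le
    linarith
  have hnuR : ((nuSimplices k G).card : ℝ) ≤ ε * (n:ℝ)^(k+1) := hcon.le
  have hDR : (D.card : ℝ)^2 ≤ CK * ((n:ℝ)^k * ((missingSets k G).card : ℝ) +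
      (n:ℝ)^(k-1) * ((nuSimplices k G).card : ℝ)) := by
    rw [hCK]
    exact_mod_cast hDbound
  have h0 : (0:ℝ) ≤ ρ * (n:ℝ)^k := by positivity
  have hfin1 : (ρ * (n:ℝ)^k)^2 < ((D.card : ℝ))^2 := by
    rw [pow_two, pow_two]
    exact mul_self_lt_mul_self h0 hfarD
  have hA : (n:ℝ)^k * (n:ℝ)^k = ((n:ℝ)^k)^2 := (sq _).symm
  have hB : (n:ℝ)^(k-1) * (n:ℝ)^(k+1) = ((n:ℝ)^k)^2 := by
    rw [← pow_add, ← pow_mul]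
    congr 1
    omega
  have key : (ρ * (n:ℝ)^k)^2 < CK * ((n:ℝ)^k * (ε * (n:ℝ)^k) +
      (n:ℝ)^(k-1) * (ε * (n:ℝ)^(k+1))) := by
    refine hfin1.trans_le (hDR.trans ?_)
    have hnk : (0:ℝ) ≤ (n:ℝ)^k := by positivity
    have hnk1 : (0:ℝ) ≤ (n:ℝ)^(k-1) := by positivity
    refine mul_le_mul_of_nonneg_left ?_ hCKpos.le
    exact add_le_add (mul_le_mul_of_nonneg_left hmissR hnk)
      (mul_le_mul_of_nonneg_left hnuR hnk1)
  have expand : CK * ((n:ℝ)^k * (ε * (n:ℝ)^k) + (n:ℝ)^(k-1) * (ε * (n:ℝ)^(k+1)))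
      = ρ^2 * ((n:ℝ)^k)^2 := by
    have e1 : CK * ((n:ℝ)^k * (ε * (n:ℝ)^k) + (n:ℝ)^(k-1) * (ε * (n:ℝ)^(k+1)))
        = CK * ε * ((n:ℝ)^k * (n:ℝ)^k + (n:ℝ)^(k-1) * (n:ℝ)^(k+1)) := by ring
    rw [e1, hA, hB, hε]
    field_simp
    ring
  have hfinal : ρ^2 * ((n:ℝ)^k)^2 < ρ^2 * ((n:ℝ)^k)^2 := by
    calc ρ^2 * ((n:ℝ)^k)^2 = (ρ * (n:ℝ)^k)^2 := by ring
      _ < _ := key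
      _ = ρ^2 * ((n:ℝ)^k)^2 := expand
  exact lt_irrefl _ hfinal

end FFU

end Proof

/-- Fix `k ≥ 2`. For every `ρ > 0` there exist `ε > 0`, `c > 0`, `n₀` such
that for all `n ≥ n₀`: every simple `k`-SAT formula on `n` variables with at least
`(1−ε)·C(n,k)` clauses that is `ρ`-far from unate contains at least `c·n^(k+1)` non-unate
simplex subformulae. -/
theorem far_from_unate_many_simplices (k : ℕ) (hk : 2 ≤ k) (ρ : ℝ) (hρ : 0 < ρ) :
    ∃ ε : ℝ, 0 < ε ∧ ∃ c : ℝ, 0 < c ∧ ∃ n₀ : ℕ, ∀ n ≥ n₀,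
      ∀ G : SatFormula (Fin n), IsKFormula k G → SimpleFormula G →
      (1 - ε) * (n.choose k : ℝ) ≤ G.card →
      (¬ ∃ D ⊆ G, (D.card : ℝ) ≤ ρ * n ^ k ∧ UnateFormula (G \ D)) →
      c * n ^ (k + 1) ≤
        (Set.ncard {S : SatFormula (Fin n) | S ⊆ G ∧ SimpleFormula S ∧
          S.card = k + 1 ∧ (formulaVars S).card = k + 1 ∧ ¬ UnateFormula S} : ℝ) := by
  exact FFU.far_from_unate_many_simplices' k hk ρ hρ
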